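/- Let m be a finite-dimensional Lie algebra over ℂ equipped with a grading m = ⊕_{d<0} m(d) by strictly negative integers (so [m(c), m(d)] ⊆ m(c+d)). Then the intersection over all i ≥ 0 of the left ideals U(m)·m^i of the universal enveloping algebra (where m^i denotes the span of products of i elements of m) is zero. -/

import Mathlib

attribute [local instance 100] LieRing.ofAssociativeRing

open Polynomial UniversalEnvelopingAlgebra

noncomputable section Aux

variable {L : Type*} [LieRing L] [LieAlgebra ℂ L]

/-- Local abbreviation for the universal enveloping algebra. -/
abbrev UU (L : Type*) [LieRing L] [LieAlgebra ℂ L] := UniversalEnvelopingAlgebra ℂ L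

variable (𝓖 : ℤ → Submodule ℂ L)

/-- The component map `𝓖 d → U(L)[X]`, `v ↦ C (ι v) * X ^ (-d).toNat`. -/
def compMap (d : ℤ) : 𝓖 d →ₗ[ℂ] Polynomial (UU L) where
  toFun v := Polynomial.C (ι ℂ (v : L)) * Polynomial.X ^ (-d).toNat
  map_add' a b := by simp [add_mul]
  map_smul' c a := by
    have h : (ι ℂ) (c • (a : L)) = c • (ι ℂ) (a : L) := map_smul _ _ _
    simp only [SetLike.val_smul, h, RingHom.id_apply]
    rw [← Polynomial.smul_C, smul_mul_assoc]

variable [DirectSum.Decomposition 𝓖]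

/-- The linear map `L → U(L)[X]` sending a homogeneous element of degree `d`
to `C (ι x) * X ^ (-d).toNat`. -/
def sigmaLin : L →ₗ[ℂ] Polynomial (UU L) :=
  (DirectSum.toModule ℂ ℤ _ (compMap 𝓖)).comp (DirectSum.decomposeLinearEquiv 𝓖).toLinearMap

lemma sigmaLin_of_mem {d : ℤ} {x : L} (hx : x ∈ 𝓖 d) :
    sigmaLin 𝓖 x = Polynomial.C (ι ℂ x) * Polynomial.X ^ (-d).toNat := by
  rw [sigmaLin, LinearMap.comp_apply, LinearEquiv.coe_coe,
    DirectSum.decomposeLinearEquiv_apply, DirectSum.decompose_of_mem 𝓖 hx,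
    ← DirectSum.lof_eq_of ℂ, DirectSum.toModule_lof]
  rfl

lemma sigmaLin_coeff_zero (hneg : ∀ d : ℤ, 0 ≤ d → 𝓖 d = ⊥) :
    ∀ x : L, (sigmaLin 𝓖 x).coeff 0 = 0 := by
  apply DirectSum.Decomposition.inductionOn 𝓖 (motive := fun x => (sigmaLin 𝓖 x).coeff 0 = 0)
  · simp
  · intro d m
    rcases lt_or_ge d 0 with hd | hd
    · rw [sigmaLin_of_mem 𝓖 m.2, Polynomial.coeff_mul_X_pow']
      have h : ¬ ((-d).toNat ≤ 0) := by omega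
      simp [h]
    · have hm : (m : L) = 0 := by
        have h2 : (m : L) ∈ (⊥ : Submodule ℂ L) := by rw [← hneg d hd]; exact m.2
        simpa using h2
      rw [hm, map_zero, Polynomial.coeff_zero]
  · intro a b ha hb
    rw [map_add, Polynomial.coeff_add, ha, hb, add_zero]

lemma CX_mul (a b : UU L) (m n : ℕ) :
    (Polynomial.C a * Polynomial.X ^ m) * (Polynomial.C b * Polynomial.X ^ n) =
      Polynomial.C (a * b) * Polynomial.X ^ (m + n) := by
  rw [map_mul, pow_add]
  simp only [mul_assoc]
  rw [← mul_assoc (Polynomial.X ^ m) (Polynomial.C b) (Polynomial.X ^ n),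
    (Polynomial.commute_X_pow (Polynomial.C b) m).eq, mul_assoc]

lemma sigma_bracket (hneg : ∀ d : ℤ, 0 ≤ d → 𝓖 d = ⊥)
    (hbrack : ∀ c d : ℤ, ∀ x ∈ 𝓖 c, ∀ y ∈ 𝓖 d, ⁅x, y⁆ ∈ 𝓖 (c + d)) :
    ∀ x y : L, sigmaLin 𝓖 ⁅x, y⁆ =
      sigmaLin 𝓖 x * sigmaLin 𝓖 y - sigmaLin 𝓖 y * sigmaLin 𝓖 x := by
  have key : ∀ (c d : ℤ) (x : L), x ∈ 𝓖 c → ∀ y ∈ 𝓖 d,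
      sigmaLin 𝓖 ⁅x, y⁆ = sigmaLin 𝓖 x * sigmaLin 𝓖 y - sigmaLin 𝓖 y * sigmaLin 𝓖 x := by
    intro c d x hx y hy
    rcases le_or_gt 0 c with hc | hc
    · have : x = 0 := by rw [hneg c hc] at hx; simpa using hx
      simp [this]
    rcases le_or_gt 0 d with hd | hd
    · have : y = 0 := by rw [hneg d hd] at hy; simpa using hy
      simp [this]
    have hxy := hbrack c d x hx y hy
    rw [sigmaLin_of_mem 𝓖 hxy, sigmaLin_of_mem 𝓖 hx, sigmaLin_of_mem 𝓖 hy,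
      CX_mul, CX_mul]
    have hι : (ι ℂ) ⁅x, y⁆ = ι ℂ x * ι ℂ y - ι ℂ y * ι ℂ x := by
      rw [LieHom.map_lie, LieRing.of_associative_ring_bracket]
    have hnat : (-(c + d)).toNat = (-c).toNat + (-d).toNat := by omega
    have hnat' : (-d).toNat + (-c).toNat = (-c).toNat + (-d).toNat := by omega
    rw [hι, hnat, hnat', map_sub, sub_mul]
  intro x
  apply DirectSum.Decomposition.inductionOn 𝓖
    (motive := fun x => ∀ y : L, sigmaLin 𝓖 ⁅x, y⁆ =
      sigmaLin 𝓖 x * sigmaLin 𝓖 y - sigmaLin 𝓖 y * sigmaLin 𝓖 x)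
  · intro y; simp
  · intro c m
    apply DirectSum.Decomposition.inductionOn 𝓖
      (motive := fun y => sigmaLin 𝓖 ⁅(m : L), y⁆ =
        sigmaLin 𝓖 (m : L) * sigmaLin 𝓖 y - sigmaLin 𝓖 y * sigmaLin 𝓖 (m : L))
    · simp
    · intro d n
      exact key c d (m : L) m.2 (n : L) n.2
    · intro a b ha hb
      rw [lie_add, map_add, ha, hb, map_add]
      simp only [mul_add, add_mul]
      abel
  · intro a b ha hb y
    rw [add_lie, map_add, ha y, hb y, map_add]
    simp only [mul_add, add_mul]
    abel

/-- `sigmaLin` as a Lie algebra homomorphism into `U(L)[X]` with the commutator bracket. -/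
def sigmaHom (hneg : ∀ d : ℤ, 0 ≤ d → 𝓖 d = ⊥)
    (hbrack : ∀ c d : ℤ, ∀ x ∈ 𝓖 c, ∀ y ∈ 𝓖 d, ⁅x, y⁆ ∈ 𝓖 (c + d)) :
    L →ₗ⁅ℂ⁆ Polynomial (UU L) :=
  { sigmaLin 𝓖 with
    map_lie' := by
      intro x y
      rw [LieRing.of_associative_ring_bracket]
      exact sigma_bracket 𝓖 hneg hbrack x y }

/-- The induced algebra endomorphism `U(L) → U(L)[X]`. -/
def Phi (hneg : ∀ d : ℤ, 0 ≤ d → 𝓖 d = ⊥)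
    (hbrack : ∀ c d : ℤ, ∀ x ∈ 𝓖 c, ∀ y ∈ 𝓖 d, ⁅x, y⁆ ∈ 𝓖 (c + d)) :
    UU L →ₐ[ℂ] Polynomial (UU L) :=
  UniversalEnvelopingAlgebra.lift ℂ (sigmaHom 𝓖 hneg hbrack)

/-- Evaluation at `X = 1` as an algebra homomorphism. -/
def Ev : Polynomial (UU L) →ₐ[ℂ] UU L :=
  Polynomial.eval₂AlgHom (AlgHom.id ℂ (UU L)) 1 (fun a => Commute.one_right a)

lemma Ev_sigmaLin : ∀ x : L, Ev (L := L) (sigmaLin 𝓖 x) = ι ℂ x := by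
  apply DirectSum.Decomposition.inductionOn 𝓖 (motive := fun x => Ev (L := L) (sigmaLin 𝓖 x) = ι ℂ x)
  · simp
  · intro d m
    rw [sigmaLin_of_mem 𝓖 m.2, map_mul, map_pow]
    have h1 : Ev (L := L) (Polynomial.C (ι ℂ (m : L))) = ι ℂ (m : L) := by
      exact Polynomial.eval₂_C _ _
    have h2 : Ev (L := L) Polynomial.X = 1 := by
      exact Polynomial.eval₂_X _ _
    rw [h1, h2, one_pow, mul_one]
  · intro a b ha hb
    rw [map_add, map_add, ha, hb, map_add]

lemma Ev_Phi (hneg : ∀ d : ℤ, 0 ≤ d → 𝓖 d = ⊥)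
    (hbrack : ∀ c d : ℤ, ∀ x ∈ 𝓖 c, ∀ y ∈ 𝓖 d, ⁅x, y⁆ ∈ 𝓖 (c + d)) (u : UU L) :
    Ev (L := L) (Phi 𝓖 hneg hbrack u) = u := by
  have h : (Ev (L := L)).comp (Phi 𝓖 hneg hbrack) = AlgHom.id ℂ (UU L) := by
    apply UniversalEnvelopingAlgebra.hom_ext
    apply LieHom.ext
    intro x
    show Ev (L := L) (Phi 𝓖 hneg hbrack (ι ℂ x)) = ι ℂ x
    rw [Phi, UniversalEnvelopingAlgebra.lift_ι_apply]
    exact Ev_sigmaLin 𝓖 x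
  exact DFunLike.congr_fun h u

end Aux

section LowZero

variable (L : Type*) [LieRing L] [LieAlgebra ℂ L]

/-- Polynomials whose coefficients below degree `i` vanish. -/
def lowZero (i : ℕ) : Submodule ℂ (Polynomial (UU L)) where
  carrier := {p | ∀ j < i, p.coeff j = 0}
  add_mem' := by intro p q hp hq j hj; simp [Polynomial.coeff_add, hp j hj, hq j hj]
  zero_mem' := by intro j hj; simp
  smul_mem' := by intro c p hp j hj; simp [Polynomial.coeff_smul, hp j hj]

lemma lowZero_mul (a b : ℕ) : lowZero L a * lowZero L b ≤ lowZero L (a + b) := by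
  rw [Submodule.mul_le]
  intro p hp q hq j hj
  rw [Polynomial.coeff_mul]
  apply Finset.sum_eq_zero
  intro x hx
  rw [Finset.HasAntidiagonal.mem_antidiagonal] at hx
  by_cases h1 : x.1 < a
  · rw [hp x.1 h1, zero_mul]
  · rw [hq x.2 (by omega), mul_zero]

lemma top_mul_lowZero (i : ℕ) :
    (⊤ : Submodule ℂ (Polynomial (UU L))) * lowZero L i ≤ lowZero L i := by
  rw [Submodule.mul_le]
  intro p _ q hq j hj
  rw [Polynomial.coeff_mul]
  apply Finset.sum_eq_zero
  intro x hx
  rw [Finset.HasAntidiagonal.mem_antidiagonal] at hx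
  rw [hq x.2 (by omega), mul_zero]

lemma lowZero_pow (i : ℕ) : (lowZero L 1) ^ i ≤ lowZero L i := by
  induction i with
  | zero =>
    rw [pow_zero]
    intro p _ j hj
    omega
  | succ i ih =>
    rw [pow_succ]
    exact le_trans (mul_le_mul' ih (le_refl _)) (lowZero_mul L i 1)

end LowZero

/-- Let `m` be a finite-dimensional complex Lie algebra with a grading
`m = ⊕_{d<0} m(d)` by strictly negative integers.  Then the intersection over all
`i ≥ 0` of the left ideals `U(m)·m^i` of the universal enveloping algebra is zero,
where `m^i` denotes the span of products of `i` elements of `m`. -/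
theorem stmt3 (L : Type*) [LieRing L] [LieAlgebra ℂ L] [FiniteDimensional ℂ L]
    (𝓖 : ℤ → Submodule ℂ L)
    (hdecomp : DirectSum.IsInternal 𝓖)
    (hneg : ∀ d : ℤ, 0 ≤ d → 𝓖 d = ⊥)
    (hbrack : ∀ c d : ℤ, ∀ x ∈ 𝓖 c, ∀ y ∈ 𝓖 d, ⁅x, y⁆ ∈ 𝓖 (c + d)) :
    (⨅ i : ℕ,
      (⊤ : Submodule ℂ (UniversalEnvelopingAlgebra ℂ L)) *
        (LinearMap.range (UniversalEnvelopingAlgebra.ι ℂ (L := L)).toLinearMap) ^ i)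
      = ⊥ := by
  classical
  letI : DirectSum.Decomposition 𝓖 := hdecomp.chooseDecomposition
  set M : Submodule ℂ (UU L) :=
    LinearMap.range (UniversalEnvelopingAlgebra.ι ℂ (L := L)).toLinearMap with hM
  set Φ : UU L →ₐ[ℂ] Polynomial (UU L) := Phi 𝓖 hneg hbrack with hΦ
  have hmapM : Submodule.map Φ.toLinearMap M ≤ lowZero L 1 := by
    rintro _ ⟨_, ⟨x, rfl⟩, rfl⟩ j hj
    interval_cases j
    show (Φ (ι ℂ x)).coeff 0 = 0
    rw [hΦ, Phi, UniversalEnvelopingAlgebra.lift_ι_apply]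
    exact sigmaLin_coeff_zero 𝓖 hneg x
  rw [eq_bot_iff]
  intro u hu
  rw [Submodule.mem_iInf] at hu
  have hin : ∀ i : ℕ, Φ u ∈ lowZero L i := by
    intro i
    have h1 : Submodule.map Φ.toLinearMap (⊤ * M ^ i) ≤ lowZero L i := by
      rw [Submodule.map_mul, Submodule.map_pow]
      calc Submodule.map Φ.toLinearMap ⊤ * (Submodule.map Φ.toLinearMap M) ^ i
          ≤ ⊤ * (lowZero L 1) ^ i :=
            mul_le_mul' le_top (pow_le_pow_left' hmapM i)
        _ ≤ ⊤ * lowZero L i := mul_le_mul' (le_refl _) (lowZero_pow L i)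
        _ ≤ lowZero L i := top_mul_lowZero L i
    exact h1 ⟨u, hu i, rfl⟩
  have hzero : Φ u = 0 := by
    ext j
    rw [Polynomial.coeff_zero]
    exact hin (j + 1) j (Nat.lt_succ_self j)
  have := Ev_Phi 𝓖 hneg hbrack u
  rw [← hΦ] at this
  rw [Submodule.mem_bot, ← this, hzero, map_zero]
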